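/- Let Q ∈ ℂ^{n×n} be unitary and set U = QQᵀ (so U is unitary and symmetric). Then the set {B ∈ ℂ^{n×n} : UᴴB + BᴴU = 0 and B = Bᵀ} equals the set {i·Q R Qᵀ : R ∈ ℝ^{n×n}, R = Rᵀ}, where a real matrix R is identified with its image in ℂ^{n×n}. -/

import Mathlib

open Matrix

/-- For `U = Q * Qᵀ` with `Q` unitary, the tangent space
`{B : UᴴB + BᴴU = 0, B = Bᵀ}` equals `{i • Q R Qᵀ : R real symmetric}`. -/
theorem tangent_space_eq_real_symmetric_param {n : ℕ} (Q : Matrix (Fin n) (Fin n) ℂ)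
    (hQ : Q * Qᴴ = 1) :
    {B : Matrix (Fin n) (Fin n) ℂ |
        (Q * Qᵀ)ᴴ * B + Bᴴ * (Q * Qᵀ) = 0 ∧ B = Bᵀ} =
      {X : Matrix (Fin n) (Fin n) ℂ |
        ∃ R : Matrix (Fin n) (Fin n) ℝ, R = Rᵀ ∧
          X = Complex.I • (Q * R.map (Complex.ofReal) * Qᵀ)} := by
  have hQ2 : Qᴴ * Q = 1 := mul_eq_one_comm.mp hQ
  have h3 : Qᵀ * Qᴴᵀ = 1 := by
    have := congrArg Matrix.transpose hQ2
    simpa [Matrix.transpose_mul] using this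
  have h4 : Qᴴᵀ * Qᵀ = 1 := by
    have := congrArg Matrix.transpose hQ
    simpa [Matrix.transpose_mul] using this
  have h0 : Qᵀᴴ = Qᴴᵀ := rfl
  ext B
  simp only [Set.mem_setOf_eq]
  constructor
  · rintro ⟨h1, hB⟩
    have h1' : Qᵀᴴ * Qᴴ * B + Bᴴ * (Q * Qᵀ) = 0 := by
      simpa [Matrix.conjTranspose_mul, Matrix.mul_assoc] using h1
    -- multiply on the left by Qᵀ and on the right by Qᴴᵀ
    have key : Qᴴ * B * Qᴴᵀ + Qᵀ * Bᴴ * Q = 0 := by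
      have hmul := congrArg (fun X => Qᵀ * X * Qᴴᵀ) h1'
      simp only [Matrix.mul_add, Matrix.add_mul, Matrix.mul_zero, Matrix.zero_mul] at hmul
      calc Qᴴ * B * Qᴴᵀ + Qᵀ * Bᴴ * Q
          = Qᵀ * (Qᵀᴴ * Qᴴ * B) * Qᴴᵀ + Qᵀ * (Bᴴ * (Q * Qᵀ)) * Qᴴᵀ := by
            rw [h0]
            rw [show Qᵀ * (Qᴴᵀ * Qᴴ * B) = (Qᵀ * Qᴴᵀ) * (Qᴴ * B) by
              simp [Matrix.mul_assoc]]
            rw [h3, Matrix.one_mul]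
            rw [show Qᵀ * (Bᴴ * (Q * Qᵀ)) * Qᴴᵀ = (Qᵀ * Bᴴ * Q) * (Qᵀ * Qᴴᵀ) by
              simp [Matrix.mul_assoc]]
            rw [h3, Matrix.mul_one]
        _ = 0 := hmul
    set N : Matrix (Fin n) (Fin n) ℂ := Qᴴ * B * Qᴴᵀ with hN
    have hNconj : N.map (starRingEnd ℂ) = - N := by
      have e1 : N.map (starRingEnd ℂ) = Qᵀ * Bᴴ * Q := by
        have e0 : N.map (starRingEnd ℂ)
            = Qᴴ.map (starRingEnd ℂ) * B.map (starRingEnd ℂ) * Qᴴᵀ.map (starRingEnd ℂ) := by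
          rw [hN, Matrix.map_mul, Matrix.map_mul]
        rw [e0]
        congr 1
        · congr 1
          · ext i j
            simp [Matrix.conjTranspose_apply]
          · ext i j
            have hji : B j i = B i j := congrFun (congrFun hB j) i
            simp [Matrix.conjTranspose_apply, hji]
        · ext i j
          simp [Matrix.conjTranspose_apply]
      rw [e1, eq_neg_iff_add_eq_zero, add_comm]
      exact key
    set M : Matrix (Fin n) (Fin n) ℂ := (-Complex.I) • N with hM
    have hMreal : ∀ i j, (starRingEnd ℂ) (M i j) = M i j := by
      intro i j
      have hNij : (starRingEnd ℂ) (N i j) = - N i j := by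
        have := congrFun (congrFun hNconj i) j
        simpa [Matrix.map_apply] using this
      simp only [hM, Matrix.smul_apply, smul_eq_mul, _root_.map_mul, map_neg,
        Complex.conj_I, hNij]
      ring
    have hMsymm : Mᵀ = M := by
      rw [hM, Matrix.transpose_smul, hN]
      congr 1
      calc (Qᴴ * B * Qᴴᵀ)ᵀ = Qᴴᵀᵀ * Bᵀ * Qᴴᵀ := by
            simp [Matrix.transpose_mul, Matrix.mul_assoc]
        _ = Qᴴ * B * Qᴴᵀ := by rw [Matrix.transpose_transpose, ← hB]
    refine ⟨fun i j => (M i j).re, ?_, ?_⟩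
    · ext i j
      show (M i j).re = (M j i).re
      have := congrFun (congrFun hMsymm j) i
      simp only [Matrix.transpose_apply] at this
      rw [this]
    · have hmap : (Matrix.map (fun i j => (M i j).re : Matrix (Fin n) (Fin n) ℝ)
          Complex.ofReal) = M := by
        ext i j
        show ((M i j).re : ℂ) = M i j
        exact Complex.conj_eq_iff_re.mp (hMreal i j)
      rw [hmap, hM]
      rw [Matrix.mul_smul, Matrix.smul_mul, smul_smul]
      have hI : Complex.I * -Complex.I = 1 := by
        simp [Complex.I_mul_I]
      rw [hI, one_smul, hN]
      calc B = (Q * Qᴴ) * B * (Qᴴᵀ * Qᵀ) := by rw [hQ, h4]; simp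
        _ = Q * (Qᴴ * B * Qᴴᵀ) * Qᵀ := by simp [Matrix.mul_assoc]
  · rintro ⟨R, hR, rfl⟩
    set R' : Matrix (Fin n) (Fin n) ℂ := R.map Complex.ofReal with hR'
    have hR's : R'ᵀ = R' := by
      rw [hR', ← Matrix.transpose_map, ← hR]
    have hR'h : R'ᴴ = R' := by
      ext i j
      have hji : R j i = R i j := congrFun (congrFun hR j) i
      simp [Matrix.conjTranspose_apply, hR', Matrix.map_apply, hji]
    constructor
    · rw [Matrix.conjTranspose_mul, Matrix.mul_smul, Matrix.conjTranspose_smul,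
        Matrix.smul_mul]
      have e1 : Qᵀᴴ * Qᴴ * (Q * R' * Qᵀ) = Qᵀᴴ * R' * Qᵀ := by
        calc Qᵀᴴ * Qᴴ * (Q * R' * Qᵀ) = Qᵀᴴ * ((Qᴴ * Q) * (R' * Qᵀ)) := by
              simp [Matrix.mul_assoc]
          _ = Qᵀᴴ * R' * Qᵀ := by rw [hQ2]; simp [Matrix.mul_assoc]
      have e2 : (Q * R' * Qᵀ)ᴴ * (Q * Qᵀ) = Qᵀᴴ * R' * Qᵀ := by
        calc (Q * R' * Qᵀ)ᴴ * (Q * Qᵀ) = Qᵀᴴ * R'ᴴ * Qᴴ * (Q * Qᵀ) := by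
              simp [Matrix.conjTranspose_mul, Matrix.mul_assoc]
          _ = Qᵀᴴ * R' * ((Qᴴ * Q) * Qᵀ) := by rw [hR'h]; simp [Matrix.mul_assoc]
          _ = Qᵀᴴ * R' * Qᵀ := by rw [hQ2, Matrix.one_mul]
      rw [Matrix.mul_assoc Qᵀᴴ Qᴴ] at e1 ⊢
      rw [e1, e2]
      simp [Complex.star_def, Complex.conj_I]
    · rw [Matrix.transpose_smul]
      congr 1
      calc Q * R' * Qᵀ = (Qᵀᵀ * R'ᵀ * Qᵀ) := by rw [Matrix.transpose_transpose, hR's]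
        _ = (Q * R' * Qᵀ)ᵀ := by simp [Matrix.transpose_mul, Matrix.mul_assoc]
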